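/- Let ≻ and ≻' be two distinct linear orders on a set of n resources, and let π⁰ be the allocation assigning resource r_i to agent a_i for each i. Then there exists an agent p such that, in the profile where agent p has preference ≻' and every other agent has preference ≻, the allocation π⁰ is not Pareto-optimal. -/

import Mathlib

/-- A house market with `n` agents and `n` resources, both indexed by `Fin n`.
An allocation is a bijection from agents to resources, modeled as a permutation
of `Fin n`.  `pref i r r'` means agent `i` strictly prefers resource `r` to `r'`.
An allocation `π` is Pareto-optimal if no allocation `π'` gives every agent a
resource that is the same or strictly better, and some agent a strictly better one. -/
def ParetoOptimal {n : ℕ} (pref : Fin n → Fin n → Fin n → Prop)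
    (π : Equiv.Perm (Fin n)) : Prop :=
  ¬ ∃ π' : Equiv.Perm (Fin n),
      (∀ i, π' i = π i ∨ pref i (π' i) (π i)) ∧ ∃ j, pref j (π' j) (π j)

/-- If agent `a` (with preference `succ'`) prefers `b` to `a`, and agent `b`
(with preference `succ`) prefers `a` to `b`, then swapping improves both. -/
lemma swap_improves {n : ℕ} (succ succ' : Fin n → Fin n → Prop)
    (a b : Fin n) (hab : a ≠ b) (h1 : succ' b a) (h2 : succ a b) :
    ¬ ParetoOptimal (fun i => if i = a then succ' else succ)
      (Equiv.refl (Fin n)) := by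
  intro h
  apply h
  refine ⟨Equiv.swap a b, ?_, ⟨a, ?_⟩⟩
  · intro i
    by_cases hia : i = a
    · subst hia
      right
      simpa [Equiv.swap_apply_left] using h1
    · by_cases hib : i = b
      · subst hib
        right
        simpa [Equiv.swap_apply_right, hia] using h2
      · left
        simp [Equiv.swap_apply_of_ne_of_ne hia hib]
  · simpa [Equiv.swap_apply_left] using h1

theorem fooling_mixed_profile_not_pareto_optimal
    {n : ℕ} (succ succ' : Fin n → Fin n → Prop)
    (hsucc : IsStrictTotalOrder (Fin n) succ)
    (hsucc' : IsStrictTotalOrder (Fin n) succ')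
    (hne : succ ≠ succ') :
    ∃ p : Fin n,
      ¬ ParetoOptimal (fun i => if i = p then succ' else succ)
        (Equiv.refl (Fin n)) := by
  have : ∃ a b, succ a b ≠ succ' a b := by
    by_contra hc
    push_neg at hc
    apply hne
    funext a b
    exact hc a b
  obtain ⟨a, b, hab⟩ := this
  by_cases h1 : succ a b
  · have h2 : ¬ succ' a b := fun h => hab (by simp [h1, h])
    have hne' : a ≠ b := fun h => hsucc.irrefl a (h ▸ h1)
    have h3 : succ' b a := by
      rcases (show succ' a b ∨ a = b ∨ succ' b a by have := hsucc'.trichotomous a b; tauto) with h | h | h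
      · exact absurd h h2
      · exact absurd h hne'
      · exact h
    exact ⟨a, swap_improves succ succ' a b hne' h3 h1⟩
  · have h2 : succ' a b := by
      by_contra h
      exact hab (by simp [h1, h])
    have hne' : a ≠ b := fun h => hsucc'.irrefl a (h ▸ h2)
    have h3 : succ b a := by
      rcases (show succ a b ∨ a = b ∨ succ b a by have := hsucc.trichotomous a b; tauto) with h | h | h
      · exact absurd h h1
      · exact absurd h hne'
      · exact h
    exact ⟨b, swap_improves succ succ' b a hne'.symm h2 h3⟩
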